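/- Let r > 0, n ≥ 3 an integer, and 0 < D with D·sin(π/n) ≤ r. Define p_k = (D·cos(2πk/n), D·sin(2πk/n)) for k = 0, …, n−1. Then for every unit vector u ∈ ℝ² there exist k < n and t ≥ 0 such that ‖t·u − p_k‖ ≤ r; i.e., every ray emanating from the origin intersects the closed disk of radius r around some ring point. -/

import Mathlib

open Real

noncomputable def pt (a b : ℝ) : EuclideanSpace ℝ (Fin 2) := WithLp.toLp 2 ![a, b]

/-- In the bot-in-the-middle counterexample, if the `n ≥ 3` ring points at radius `D` satisfy
`D·sin(π/n) ≤ r`, then every ray from the origin meets the closed disk of radius `r`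
around some ring point: the central robot always sees some ring robot. -/
theorem center_robot_always_sees_ring (r : ℝ) (hr : 0 < r) (n : ℕ) (hn : 3 ≤ n)
    (D : ℝ) (hD : 0 < D) (hDr : D * Real.sin (π / n) ≤ r) :
    ∀ u : EuclideanSpace ℝ (Fin 2), ‖u‖ = 1 →
      ∃ k : Fin n, ∃ t : ℝ, 0 ≤ t ∧
        ‖t • u - pt (D * Real.cos (2 * π * k / n)) (D * Real.sin (2 * π * k / n))‖ ≤ r := by
  intro u hu
  have hπ : (0:ℝ) < π := Real.pi_pos
  have hn0 : (0:ℝ) < n := by positivity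
  have hnn : (n:ℝ) ≠ 0 := ne_of_gt hn0
  -- coordinates of u
  have hsum : u 0 ^ 2 + u 1 ^ 2 = 1 := by
    have h := hu
    rw [EuclideanSpace.norm_eq] at h
    have h2 : Real.sqrt (∑ i : Fin 2, ‖u i‖ ^ 2) ^ 2 = 1 := by rw [h]; norm_num
    rw [Real.sq_sqrt (by positivity)] at h2
    simpa [Fin.sum_univ_two, sq_abs] using h2
  set z : ℂ := ⟨u 0, u 1⟩ with hzdef
  have habs : ‖z‖ = 1 := by
    have : ‖z‖ ^ 2 = 1 := by
      rw [Complex.sq_norm, Complex.normSq_mk]; nlinarith [hsum]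
    nlinarith [norm_nonneg z, this]
  have hz0 : z ≠ 0 := by
    intro h
    rw [h] at habs; simp at habs
  set θ := Complex.arg z with hθdef
  have hcos : Real.cos θ = u 0 := by
    rw [hθdef, Complex.cos_arg hz0, habs]; simp [hzdef]
  have hsin : Real.sin θ = u 1 := by
    rw [hθdef, Complex.sin_arg, habs]; simp [hzdef]
  set m : ℤ := round ((n:ℝ) * θ / (2 * π)) with hmdef
  have hk : (m % n).toNat < n := by
    have h1 : 0 ≤ m % n := Int.emod_nonneg m (by exact_mod_cast (by omega : n ≠ 0))
    have h2 : m % n < n := Int.emod_lt_of_pos m (by exact_mod_cast (by omega : 0 < n))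
    omega
  set k : Fin n := ⟨(m % n).toNat, hk⟩ with hkdef
  set φ : ℝ := 2 * π * m / n with hφdef
  set Δ : ℝ := θ - φ with hΔdef
  -- angle of the chosen ring point equals φ modulo 2π
  have hkr : (k : ℝ) = (m : ℝ) - (m / n : ℤ) * n := by
    have h1 : 0 ≤ m % (n:ℤ) := Int.emod_nonneg m (by exact_mod_cast (by omega : n ≠ 0))
    have h2 : ((m % (n:ℤ)).toNat : ℤ) = m % (n:ℤ) := Int.toNat_of_nonneg h1
    have h3 : ((k:ℕ) : ℝ) = ((m % (n:ℤ) : ℤ) : ℝ) := by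
      rw [hkdef]; exact_mod_cast congrArg (Int.cast : ℤ → ℝ) h2
    rw [h3, Int.emod_def]; push_cast; ring
  have hcosk : Real.cos (2 * π * k / n) = Real.cos φ := by
    have harg : 2 * π * (k:ℝ) / n = φ - (m / n : ℤ) * (2 * π) := by
      rw [hkr, hφdef]; field_simp
    rw [harg, Real.cos_sub_int_mul_two_pi]
  have hsink : Real.sin (2 * π * k / n) = Real.sin φ := by
    have harg : 2 * π * (k:ℝ) / n = φ - (m / n : ℤ) * (2 * π) := by
      rw [hkr, hφdef]; field_simp
    rw [harg, Real.sin_sub_int_mul_two_pi]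
  -- |Δ| ≤ π/n
  have hΔeq : Δ = (2 * π / n) * ((n:ℝ) * θ / (2 * π) - m) := by
    rw [hΔdef, hφdef]; field_simp
  have hΔle : |Δ| ≤ π / n := by
    rw [hΔeq, abs_mul, abs_of_pos (by positivity)]
    have := abs_sub_round ((n:ℝ) * θ / (2 * π))
    calc 2 * π / n * |(n:ℝ) * θ / (2 * π) - (m:ℝ)| ≤ 2 * π / n * (1/2) := by
          apply mul_le_mul_of_nonneg_left this (by positivity)
      _ = π / n := by ring
  have hπn2 : π / n ≤ π / 2 := by
    apply div_le_div_of_nonneg_left hπ.le (by norm_num)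
    exact_mod_cast (by omega : 2 ≤ n)
  have hΔ2 : |Δ| ≤ π / 2 := hΔle.trans hπn2
  have hcosΔ : 0 ≤ Real.cos Δ := by
    apply Real.cos_nonneg_of_mem_Icc
    constructor
    · linarith [abs_le.mp hΔ2 |>.1]
    · linarith [abs_le.mp hΔ2 |>.2]
  refine ⟨k, D * Real.cos Δ, by positivity, ?_⟩
  set t : ℝ := D * Real.cos Δ with htdef
  -- compute the norm
  have hnorm : ‖t • u - pt (D * Real.cos (2 * π * k / n)) (D * Real.sin (2 * π * k / n))‖
      = Real.sqrt ((D * Real.sin Δ)^2) := by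
    rw [EuclideanSpace.norm_eq]
    congr 1
    rw [Fin.sum_univ_two]
    have h0 : (t • u - pt (D * Real.cos (2*π*k/n)) (D * Real.sin (2*π*k/n))) 0
        = t * u 0 - D * Real.cos φ := by
      simp [pt, hcosk]
    have h1 : (t • u - pt (D * Real.cos (2*π*k/n)) (D * Real.sin (2*π*k/n))) 1
        = t * u 1 - D * Real.sin φ := by
      simp [pt, hsink]
    rw [h0, h1]
    have hcs : Real.cos θ * Real.cos φ + Real.sin θ * Real.sin φ = Real.cos Δ := by
      rw [hΔdef, Real.cos_sub]
    have hpy : Real.sin φ ^ 2 + Real.cos φ ^ 2 = 1 := Real.sin_sq_add_cos_sq φ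
    have hpyΔ : Real.sin Δ ^ 2 + Real.cos Δ ^ 2 = 1 := Real.sin_sq_add_cos_sq Δ
    have hpyθ : Real.sin θ ^ 2 + Real.cos θ ^ 2 = 1 := Real.sin_sq_add_cos_sq θ
    rw [← hcos, ← hsin, htdef]
    rw [Real.norm_eq_abs, Real.norm_eq_abs, sq_abs, sq_abs]
    linear_combination (D^2 * Real.cos Δ^2) * hpyθ - (2 * D^2 * Real.cos Δ) * hcs + D^2 * hpy - D^2 * hpyΔ
  rw [hnorm, Real.sqrt_sq_eq_abs, abs_mul, abs_of_pos hD]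
  have hsinle : |Real.sin Δ| ≤ Real.sin (π / n) := by
    have habs' : |Real.sin Δ| = Real.sin |Δ| := by
      rcases le_or_gt 0 Δ with h | h
      · rw [abs_of_nonneg h, abs_of_nonneg]
        exact Real.sin_nonneg_of_nonneg_of_le_pi h (by linarith [abs_le.mp hΔ2 |>.2, abs_of_nonneg h, hπ])
      · have hge : -π ≤ Δ := by linarith [abs_le.mp hΔ2 |>.1]
        have hs : Real.sin Δ ≤ 0 := by
          have h2 := Real.sin_nonneg_of_nonneg_of_le_pi (by linarith : (0:ℝ) ≤ -Δ)
            (by linarith : -Δ ≤ π)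
          rw [Real.sin_neg] at h2; linarith
        rw [abs_of_neg h, abs_of_nonpos hs, Real.sin_neg]
    rw [habs']
    apply Real.strictMonoOn_sin.monotoneOn _ _ hΔle
    · constructor
      · linarith [abs_nonneg Δ, hπ]
      · exact hΔ2
    · have h0 : 0 < π / n := by positivity
      exact ⟨by linarith, hπn2⟩
  calc D * |Real.sin Δ| ≤ D * Real.sin (π / n) := by
        apply mul_le_mul_of_nonneg_left hsinle hD.le
    _ ≤ r := hDr
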